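/- If R is a ring without zero divisors and G is a right-orderable group, then every unit of the group ring R[G] is of the form r·g with r a unit of R and g ∈ G. -/

import Mathlib

/-- If `R` is a ring without zero divisors and `G` is a right-orderable group, then the
only units of the group ring `R[G]` are the monomials `r · g` with `r` a unit of `R`. -/
theorem groupRing_units_are_monomials_of_rightOrderable
    (R : Type*) [Ring R]
    (hR : ∀ a b : R, a * b = 0 → a = 0 ∨ b = 0)
    (G : Type*) [Group G]
    (lt : G → G → Prop) (hsto : IsStrictTotalOrder G lt)
    (hright : ∀ x y z : G, lt x y → lt (x * z) (y * z))
    (u : (MonoidAlgebra R G)ˣ) :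
    ∃ (r : Rˣ) (g : G), (u : MonoidAlgebra R G) = MonoidAlgebra.single g (r : R) := by
  classical
  by_cases hR0 : (1 : R) = 0
  · haveI : Subsingleton R := subsingleton_of_zero_eq_one hR0.symm
    exact ⟨1, 1, Subsingleton.elim _ _⟩
  haveI : Nontrivial R := ⟨1, 0, hR0⟩
  haveI : NoZeroDivisors R := ⟨fun {a b} h => hR a b h⟩
  haveI := hsto
  letI : LinearOrder G := linearOrderOfSTO lt
  haveI : MulRightStrictMono G := ⟨fun z x y h => hright x y z h⟩
  haveI : TwoUniqueProds G := TwoUniqueProds.of_covariant_left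
  set f : MonoidAlgebra R G := (u : MonoidAlgebra R G) with hf
  set g : MonoidAlgebra R G := (↑u⁻¹ : MonoidAlgebra R G) with hg
  have hfg : f * g = 1 := u.mul_inv
  have hgf : g * f = 1 := u.inv_mul
  have hf0 : f ≠ 0 := by
    intro h; rw [h, zero_mul] at hfg; exact one_ne_zero hfg.symm
  have hg0 : g ≠ 0 := by
    intro h; rw [h, mul_zero] at hfg; exact one_ne_zero hfg.symm
  -- the support of f*g = 1 is {1}
  have hsupp : (f * g).coeff.support = {(1 : G)} := by
    rw [hfg, MonoidAlgebra.one_def, MonoidAlgebra.coeff_single]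
    exact Finsupp.support_single_ne_zero _ one_ne_zero
  -- the supports of f and g are singletons
  have hcard : f.coeff.support.card * g.coeff.support.card ≤ 1 := by
    by_contra hlt
    push_neg at hlt
    obtain ⟨p1, hp1, p2, hp2, hne, hu1, hu2⟩ :=
      TwoUniqueProds.uniqueMul_of_one_lt_card (A := f.coeff.support) (B := g.coeff.support) hlt
    rw [Finset.mem_product] at hp1 hp2
    have h1 : (f * g).coeff (p1.1 * p1.2) = f.coeff p1.1 * g.coeff p1.2 :=
      MonoidAlgebra.mul_apply_mul_eq_mul_of_uniqueMul hu1
    have h2 : (f * g).coeff (p2.1 * p2.2) = f.coeff p2.1 * g.coeff p2.2 :=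
      MonoidAlgebra.mul_apply_mul_eq_mul_of_uniqueMul hu2
    have hm1 : p1.1 * p1.2 = 1 := by
      have : p1.1 * p1.2 ∈ (f * g).coeff.support := by
        rw [Finsupp.mem_support_iff, h1]
        exact mul_ne_zero (Finsupp.mem_support_iff.mp hp1.1)
          (Finsupp.mem_support_iff.mp hp1.2)
      rwa [hsupp, Finset.mem_singleton] at this
    have hm2 : p2.1 * p2.2 = 1 := by
      have : p2.1 * p2.2 ∈ (f * g).coeff.support := by
        rw [Finsupp.mem_support_iff, h2]
        exact mul_ne_zero (Finsupp.mem_support_iff.mp hp2.1)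
          (Finsupp.mem_support_iff.mp hp2.2)
      rwa [hsupp, Finset.mem_singleton] at this
    obtain ⟨ha, hb⟩ := hu1 hp2.1 hp2.2 (hm2.trans hm1.symm)
    exact hne (Prod.ext ha hb).symm
  have hfne : f.coeff.support.Nonempty := Finsupp.support_nonempty_iff.mpr (by rwa [Ne, MonoidAlgebra.coeff_eq_zero])
  have hgne : g.coeff.support.Nonempty := Finsupp.support_nonempty_iff.mpr (by rwa [Ne, MonoidAlgebra.coeff_eq_zero])
  have h1 : 0 < f.coeff.support.card := Finset.Nonempty.card_pos hfne
  have h2 : 0 < g.coeff.support.card := Finset.Nonempty.card_pos hgne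
  have hfc : f.coeff.support.card = 1 :=
    le_antisymm (le_trans (Nat.le_mul_of_pos_right _ h2) hcard) h1
  have hgc : g.coeff.support.card = 1 :=
    le_antisymm (le_trans (Nat.le_mul_of_pos_left _ h1) hcard) h2
  obtain ⟨a, ha⟩ := Finset.card_eq_one.mp hfc
  obtain ⟨b, hb⟩ := Finset.card_eq_one.mp hgc
  obtain ⟨hra, hfa⟩ := Finsupp.support_eq_singleton.mp ha
  obtain ⟨hsb, hgb⟩ := Finsupp.support_eq_singleton.mp hb
  have hfa' : f = MonoidAlgebra.single a (f.coeff a) := MonoidAlgebra.coeff_injective hfa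
  have hgb' : g = MonoidAlgebra.single b (g.coeff b) := MonoidAlgebra.coeff_injective hgb
  set r : R := f.coeff a
  set s : R := g.coeff b
  have hmul : MonoidAlgebra.single (a * b) (r * s) = MonoidAlgebra.single (1 : G) (1 : R) := by
    rw [← MonoidAlgebra.single_mul_single, ← hfa', ← hgb', hfg, MonoidAlgebra.one_def]
  have hmul' : MonoidAlgebra.single (b * a) (s * r) = MonoidAlgebra.single (1 : G) (1 : R) := by
    rw [← MonoidAlgebra.single_mul_single, ← hgb', ← hfa', hgf, MonoidAlgebra.one_def]
  have h1 := MonoidAlgebra.single_inj.mp hmul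
  have h2 := MonoidAlgebra.single_inj.mp hmul'
  rcases h1 with ⟨hab, hrs⟩ | ⟨_, h01⟩
  · rcases h2 with ⟨hba, hsr⟩ | ⟨_, h01⟩
    · exact ⟨⟨r, s, hrs, hsr⟩, a, hfa'⟩
    · exact absurd h01 hR0
  · exact absurd h01 hR0
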